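/- Let K ∈ ℝ_{>0}^{R1×R2} be entrywise positive, let μ, ν be entrywise positive probability vectors, and let v^{(t)} be the Sinkhorn iterates u^{(t+1)} = μ ./ (K v^{(t)}), v^{(t+1)} = ν ./ (Kᵀ u^{(t+1)}) with fixed point (u*, v*). Then for every t ≥ 0 and every ε > 0, ‖ε log v^{(t)} − ε log v*‖_var ≤ κ(K)^{2t} · ‖ε log v^{(0)} − ε log v*‖_var, i.e. the approximate gradient converges geometrically to the true gradient in variation seminorm. -/

import Mathlib

noncomputable section

open Finset

/-- The variation seminorm `‖w‖_var = max_i w_i - min_i w_i`. -/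
def varSeminorm {R : ℕ} (w : Fin R → ℝ) : ℝ :=
  (⨆ i, w i) - ⨅ i, w i

/-- `ψ(K) = max_{i,j,k,l} (K_{ik} K_{jl})/(K_{jk} K_{il})` for a positive matrix `K`. -/
def psiK {R1 R2 : ℕ} (K : Matrix (Fin R1) (Fin R2) ℝ) : ℝ :=
  ⨆ i, ⨆ j, ⨆ k, ⨆ l, K i k * K j l / (K j k * K i l)

/-- The Birkhoff contraction constant `κ(K) = (√ψ(K) - 1)/(√ψ(K) + 1)`. -/
def kappaK {R1 R2 : ℕ} (K : Matrix (Fin R1) (Fin R2) ℝ) : ℝ :=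
  (Real.sqrt (psiK K) - 1) / (Real.sqrt (psiK K) + 1)


-- helpers
lemma bdd {α : Type*} [Finite α] (f : α → ℝ) : BddAbove (Set.range f) :=
  Set.Finite.bddAbove (Set.finite_range f)

lemma bddB {α : Type*} [Finite α] (f : α → ℝ) : BddBelow (Set.range f) :=
  Set.Finite.bddBelow (Set.finite_range f)

lemma var_nonneg {R : ℕ} [Nonempty (Fin R)] (w : Fin R → ℝ) : 0 ≤ varSeminorm w := by
  obtain ⟨i⟩ := ‹Nonempty (Fin R)›
  have h1 : w i ≤ ⨆ j, w j := le_ciSup (bdd w) i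
  have h2 : (⨅ j, w j) ≤ w i := ciInf_le (bddB w) i
  unfold varSeminorm; linarith

lemma var_le {R : ℕ} [Nonempty (Fin R)] {w : Fin R → ℝ} {c : ℝ}
    (h : ∀ k l, w k - w l ≤ c) : varSeminorm w ≤ c := by
  unfold varSeminorm
  rw [sub_le_iff_le_add]
  apply ciSup_le
  intro k
  rw [add_comm, ← sub_le_iff_le_add]
  apply le_ciInf
  intro l
  have := h k l
  linarith [h k l]

lemma var_smul {R : ℕ} [Nonempty (Fin R)] (w : Fin R → ℝ) {c : ℝ} (hc : 0 ≤ c) :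
    varSeminorm (fun i => c * w i) = c * varSeminorm w := by
  unfold varSeminorm
  rw [mul_sub, Real.mul_iSup_of_nonneg hc, Real.mul_iInf_of_nonneg hc]

lemma sub_le_var {R : ℕ} [Nonempty (Fin R)] (w : Fin R → ℝ) (k l : Fin R) :
    w k - w l ≤ varSeminorm w := by
  have h1 : w k ≤ ⨆ j, w j := le_ciSup (bdd w) k
  have h2 : (⨅ j, w j) ≤ w l := ciInf_le (bddB w) l
  unfold varSeminorm; linarith

lemma le_psiK {R1 R2 : ℕ} [Nonempty (Fin R1)] [Nonempty (Fin R2)]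
    (K : Matrix (Fin R1) (Fin R2) ℝ) (i j : Fin R1) (k l : Fin R2) :
    K i k * K j l / (K j k * K i l) ≤ psiK K := by
  unfold psiK
  calc K i k * K j l / (K j k * K i l)
      ≤ ⨆ l, K i k * K j l / (K j k * K i l) :=
        le_ciSup (bdd fun l => K i k * K j l / (K j k * K i l)) l
    _ ≤ ⨆ k, ⨆ l, K i k * K j l / (K j k * K i l) :=
        le_ciSup (bdd fun k => ⨆ l, K i k * K j l / (K j k * K i l)) k
    _ ≤ ⨆ j, ⨆ k, ⨆ l, K i k * K j l / (K j k * K i l) :=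
        le_ciSup (bdd fun j => ⨆ k, ⨆ l, K i k * K j l / (K j k * K i l)) j
    _ ≤ ⨆ i, ⨆ j, ⨆ k, ⨆ l, K i k * K j l / (K j k * K i l) :=
        le_ciSup (bdd fun i => ⨆ j, ⨆ k, ⨆ l, K i k * K j l / (K j k * K i l)) i

lemma psiK_le {R1 R2 : ℕ} [Nonempty (Fin R1)] [Nonempty (Fin R2)]
    (K : Matrix (Fin R1) (Fin R2) ℝ) {c : ℝ}
    (h : ∀ (i j : Fin R1) (k l : Fin R2), K i k * K j l / (K j k * K i l) ≤ c) :
    psiK K ≤ c := by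
  unfold psiK
  exact ciSup_le fun i => ciSup_le fun j => ciSup_le fun k => ciSup_le fun l => h i j k l

lemma one_le_psiK {R1 R2 : ℕ} [Nonempty (Fin R1)] [Nonempty (Fin R2)]
    (K : Matrix (Fin R1) (Fin R2) ℝ) (hK : ∀ i j, 0 < K i j) : 1 ≤ psiK K := by
  obtain ⟨i⟩ := ‹Nonempty (Fin R1)›
  obtain ⟨k⟩ := ‹Nonempty (Fin R2)›
  have := le_psiK K i i k k
  rwa [div_self (mul_pos (hK i k) (hK i k)).ne'] at this

lemma one_le_sqrt_psiK {R1 R2 : ℕ} [Nonempty (Fin R1)] [Nonempty (Fin R2)]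
    (K : Matrix (Fin R1) (Fin R2) ℝ) (hK : ∀ i j, 0 < K i j) : 1 ≤ Real.sqrt (psiK K) := by
  rw [show (1:ℝ) = Real.sqrt 1 by simp]
  exact Real.sqrt_le_sqrt (one_le_psiK K hK)

lemma kappa_nonneg {R1 R2 : ℕ} [Nonempty (Fin R1)] [Nonempty (Fin R2)]
    (K : Matrix (Fin R1) (Fin R2) ℝ) (hK : ∀ i j, 0 < K i j) : 0 ≤ kappaK K := by
  have h := one_le_sqrt_psiK K hK
  unfold kappaK
  apply div_nonneg <;> linarith

lemma psiK_transpose {R1 R2 : ℕ} [Nonempty (Fin R1)] [Nonempty (Fin R2)]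
    (K : Matrix (Fin R1) (Fin R2) ℝ) : psiK K.transpose = psiK K := by
  apply le_antisymm
  · apply psiK_le
    intro i j k l
    simpa [Matrix.transpose_apply, mul_comm] using le_psiK K k l i j
  · apply psiK_le
    intro i j k l
    simpa [Matrix.transpose_apply, mul_comm] using le_psiK K.transpose k l i j

lemma kappaK_transpose {R1 R2 : ℕ} [Nonempty (Fin R1)] [Nonempty (Fin R2)]
    (K : Matrix (Fin R1) (Fin R2) ℝ) : kappaK K.transpose = kappaK K := by
  unfold kappaK; rw [psiK_transpose]

lemma key_frac {p q s t ψ : ℝ} (hp : 0 < p) (hq : 0 < q) (hs : 0 < s) (ht : 0 < t)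
    (hψ : 1 ≤ ψ) (hcross : p * t ≤ ψ * (q * s)) :
    p / (p + q) - s / (s + t) ≤ (Real.sqrt ψ - 1) / (Real.sqrt ψ + 1) := by
  set σ := Real.sqrt ψ with hσdef
  have hσ1 : 1 ≤ σ := by
    rw [hσdef, show (1:ℝ) = Real.sqrt 1 by simp]
    exact Real.sqrt_le_sqrt hψ
  have hσsq : σ ^ 2 = ψ := Real.sq_sqrt (by linarith)
  set u := Real.sqrt (p * t) with hudef
  set v := Real.sqrt (q * s) with hvdef
  have hu0 : 0 ≤ u := Real.sqrt_nonneg _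
  have hv0 : 0 ≤ v := Real.sqrt_nonneg _
  have hu2 : u ^ 2 = p * t := Real.sq_sqrt (by positivity)
  have hv2 : v ^ 2 = q * s := Real.sq_sqrt (by positivity)
  have huv : u ≤ σ * v := by
    have h1 : p * t ≤ (σ * v) ^ 2 := by rw [mul_pow, hσsq, hv2]; exact hcross
    have h2 : u ≤ Real.sqrt ((σ * v) ^ 2) := by
      rw [hudef]; exact Real.sqrt_le_sqrt h1
    rwa [Real.sqrt_sq (by positivity)] at h2
  have h2uv : 2 * (u * v) ≤ p * s + q * t := by
    have h3 : u * v = Real.sqrt (p * s) * Real.sqrt (q * t) := by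
      rw [hudef, hvdef, ← Real.sqrt_mul (by positivity), ← Real.sqrt_mul (by positivity)]
      ring_nf
    have h4 := sq_nonneg (Real.sqrt (p * s) - Real.sqrt (q * t))
    have h5 : Real.sqrt (p * s) ^ 2 = p * s := Real.sq_sqrt (by positivity)
    have h6 : Real.sqrt (q * t) ^ 2 = q * t := Real.sq_sqrt (by positivity)
    nlinarith [h4]
  have hpq : (0:ℝ) < p + q := by linarith
  have hst : (0:ℝ) < s + t := by linarith
  rw [div_sub_div _ _ hpq.ne' hst.ne', div_le_div_iff₀ (by positivity) (by positivity)]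
  nlinarith [mul_nonneg (sub_nonneg.mpr huv) (add_nonneg hu0 hv0),
    mul_le_mul_of_nonneg_left h2uv (by linarith : (0:ℝ) ≤ σ - 1)]

lemma dobrushin {n : ℕ} [Nonempty (Fin n)] {a a' : Fin n → ℝ} {ψ : ℝ}
    (ha : ∀ i, 0 < a i) (ha' : ∀ i, 0 < a' i) (hψ : 1 ≤ ψ)
    (hcross : ∀ i j, a i * a' j ≤ ψ * (a j * a' i)) (S : Finset (Fin n)) :
    (∑ i ∈ S, a i) / (∑ i, a i) - (∑ i ∈ S, a' i) / (∑ i, a' i) ≤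
      (Real.sqrt ψ - 1) / (Real.sqrt ψ + 1) := by
  have hσ1 : 1 ≤ Real.sqrt ψ := by
    rw [show (1:ℝ) = Real.sqrt 1 by simp]; exact Real.sqrt_le_sqrt hψ
  have hκ0 : 0 ≤ (Real.sqrt ψ - 1) / (Real.sqrt ψ + 1) := by
    apply div_nonneg <;> linarith
  rcases S.eq_empty_or_nonempty with hS | hS
  · simp [hS, hκ0]
  rcases (Sᶜ).eq_empty_or_nonempty with hSc | hSc
  · have hSu : S = Finset.univ := by
      rwa [Finset.compl_eq_empty_iff] at hSc
    subst hSu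
    have h1 : (0:ℝ) < ∑ i, a i := Finset.sum_pos (fun i _ => ha i) Finset.univ_nonempty
    have h2 : (0:ℝ) < ∑ i, a' i := Finset.sum_pos (fun i _ => ha' i) Finset.univ_nonempty
    rw [div_self h1.ne', div_self h2.ne', sub_self]
    exact hκ0
  set p := ∑ i ∈ S, a i with hp
  set q := ∑ i ∈ Sᶜ, a i with hq
  set s := ∑ i ∈ S, a' i with hs
  set t := ∑ i ∈ Sᶜ, a' i with ht
  have hppos : 0 < p := Finset.sum_pos (fun i _ => ha i) hS
  have hqpos : 0 < q := Finset.sum_pos (fun i _ => ha i) hSc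
  have hspos : 0 < s := Finset.sum_pos (fun i _ => ha' i) hS
  have htpos : 0 < t := Finset.sum_pos (fun i _ => ha' i) hSc
  have hsum1 : ∑ i, a i = p + q := (Finset.sum_add_sum_compl S a).symm
  have hsum2 : ∑ i, a' i = s + t := (Finset.sum_add_sum_compl S a').symm
  have hcr : p * t ≤ ψ * (q * s) := by
    calc p * t = ∑ i ∈ S, ∑ j ∈ Sᶜ, a i * a' j := by
          rw [hp, ht, Finset.sum_mul_sum]
      _ ≤ ∑ i ∈ S, ∑ j ∈ Sᶜ, ψ * (a j * a' i) := by
          apply Finset.sum_le_sum; intro i _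
          apply Finset.sum_le_sum; intro j _
          exact hcross i j
      _ = ψ * (q * s) := by
          simp only [← Finset.mul_sum]
          rw [hq, hs, Finset.sum_mul_sum]
          rw [Finset.sum_comm]
  rw [hsum1, hsum2]
  exact key_frac hppos hqpos hspos htpos hψ hcr

lemma deriv_bound {n : ℕ} [Nonempty (Fin n)] {a a' : Fin n → ℝ} {ψ : ℝ}
    (ha : ∀ i, 0 < a i) (ha' : ∀ i, 0 < a' i) (hψ : 1 ≤ ψ)
    (hcross : ∀ i j, a i * a' j ≤ ψ * (a j * a' i)) (d : Fin n → ℝ) :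
    (∑ i, a i * d i) / (∑ i, a i) - (∑ i, a' i * d i) / (∑ i, a' i) ≤
      (Real.sqrt ψ - 1) / (Real.sqrt ψ + 1) * varSeminorm d := by
  set κ := (Real.sqrt ψ - 1) / (Real.sqrt ψ + 1) with hκdef
  have hA : (0:ℝ) < ∑ i, a i := Finset.sum_pos (fun i _ => ha i) Finset.univ_nonempty
  have hA' : (0:ℝ) < ∑ i, a' i := Finset.sum_pos (fun i _ => ha' i) Finset.univ_nonempty
  set π : Fin n → ℝ := fun i => a i / (∑ j, a j) with hπdef
  set π' : Fin n → ℝ := fun i => a' i / (∑ j, a' j) with hπ'def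
  have hπ1 : ∑ i, π i = 1 := by rw [hπdef, ← Finset.sum_div, div_self hA.ne']
  have hπ'1 : ∑ i, π' i = 1 := by rw [hπ'def, ← Finset.sum_div, div_self hA'.ne']
  set c := ((⨆ i, d i) + ⨅ i, d i) / 2 with hcdef
  set M := varSeminorm d / 2 with hMdef
  have hM0 : 0 ≤ M := by
    obtain ⟨i⟩ := ‹Nonempty (Fin n)›
    have h1 : d i ≤ ⨆ j, d j := le_ciSup (bdd d) i
    have h2 : (⨅ j, d j) ≤ d i := ciInf_le (bddB d) i
    rw [hMdef]; unfold varSeminorm; linarith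
  have hdM : ∀ i, |d i - c| ≤ M := by
    intro i
    have h1 : d i ≤ ⨆ j, d j := le_ciSup (bdd d) i
    have h2 : (⨅ j, d j) ≤ d i := ciInf_le (bddB d) i
    rw [abs_le, hMdef, hcdef]; unfold varSeminorm
    constructor <;> [linarith; linarith]
  -- rewrite LHS
  have hL1 : (∑ i, a i * d i) / (∑ i, a i) = ∑ i, π i * d i := by
    rw [Finset.sum_div]
    apply Finset.sum_congr rfl; intro i _
    rw [hπdef]; ring
  have hL2 : (∑ i, a' i * d i) / (∑ i, a' i) = ∑ i, π' i * d i := by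
    rw [Finset.sum_div]
    apply Finset.sum_congr rfl; intro i _
    rw [hπ'def]; ring
  rw [hL1, hL2]
  have hcenter : (∑ i, π i * d i) - (∑ i, π' i * d i) =
      ∑ i, (π i - π' i) * (d i - c) := by
    have : ∑ i, (π i - π' i) * (d i - c) =
        (∑ i, π i * d i) - (∑ i, π' i * d i) - c * ((∑ i, π i) - (∑ i, π' i)) := by
      rw [mul_sub, Finset.mul_sum, Finset.mul_sum, ← Finset.sum_sub_distrib,
        ← Finset.sum_sub_distrib, ← Finset.sum_sub_distrib]
      apply Finset.sum_congr rfl; intro i _; ring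
    rw [this, hπ1, hπ'1]; ring
  rw [hcenter]
  -- bound by sum of abs
  have hstep1 : ∑ i, (π i - π' i) * (d i - c) ≤ (∑ i, |π i - π' i|) * M := by
    rw [Finset.sum_mul]
    apply Finset.sum_le_sum; intro i _
    calc (π i - π' i) * (d i - c) ≤ |(π i - π' i) * (d i - c)| := le_abs_self _
      _ = |π i - π' i| * |d i - c| := abs_mul _ _
      _ ≤ |π i - π' i| * M := mul_le_mul_of_nonneg_left (hdM i) (abs_nonneg _)
  -- TV bound
  set S := Finset.univ.filter (fun i => π' i ≤ π i) with hSdef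
  have hzero : (∑ i ∈ S, (π i - π' i)) + ∑ i ∈ Sᶜ, (π i - π' i) = 0 := by
    rw [Finset.sum_add_sum_compl, Finset.sum_sub_distrib, hπ1, hπ'1]; ring
  have habs : ∑ i, |π i - π' i| = 2 * ∑ i ∈ S, (π i - π' i) := by
    rw [← Finset.sum_add_sum_compl S fun i => |π i - π' i|]
    have e1 : ∑ i ∈ S, |π i - π' i| = ∑ i ∈ S, (π i - π' i) := by
      apply Finset.sum_congr rfl; intro i hi
      rw [hSdef, Finset.mem_filter] at hi
      exact abs_of_nonneg (by linarith [hi.2])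
    have e2 : ∑ i ∈ Sᶜ, |π i - π' i| = - ∑ i ∈ Sᶜ, (π i - π' i) := by
      rw [← Finset.sum_neg_distrib]
      apply Finset.sum_congr rfl; intro i hi
      rw [Finset.mem_compl, hSdef, Finset.mem_filter] at hi
      push_neg at hi
      have := hi (Finset.mem_univ i)
      rw [abs_of_nonpos (by linarith)]
    rw [e1, e2]; linarith
  have htv : ∑ i ∈ S, (π i - π' i) ≤ κ := by
    have : ∑ i ∈ S, (π i - π' i) =
        (∑ i ∈ S, a i) / (∑ i, a i) - (∑ i ∈ S, a' i) / (∑ i, a' i) := by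
      rw [Finset.sum_sub_distrib, Finset.sum_div, Finset.sum_div]
    rw [this]
    exact dobrushin ha ha' hψ hcross S
  calc ∑ i, (π i - π' i) * (d i - c) ≤ (∑ i, |π i - π' i|) * M := hstep1
    _ = (2 * ∑ i ∈ S, (π i - π' i)) * M := by rw [habs]
    _ ≤ (2 * κ) * M := by
        apply mul_le_mul_of_nonneg_right _ hM0
        linarith [htv]
    _ = κ * varSeminorm d := by rw [hMdef]; ring


lemma hasDeriv_logsum {n : ℕ} [Nonempty (Fin n)] (w : Fin n → ℝ) (hw : ∀ i, 0 < w i)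
    (g d : Fin n → ℝ) (s : ℝ) :
    HasDerivAt (fun t => Real.log (∑ i, w i * Real.exp (g i + t * d i)))
      ((∑ i, (w i * Real.exp (g i + s * d i)) * d i) /
        (∑ i, w i * Real.exp (g i + s * d i))) s := by
  have hsum : ∀ t : ℝ, 0 < ∑ i, w i * Real.exp (g i + t * d i) := fun t =>
    Finset.sum_pos (fun i _ => mul_pos (hw i) (Real.exp_pos _)) Finset.univ_nonempty
  have h1 : HasDerivAt (fun t => ∑ i, w i * Real.exp (g i + t * d i))
      (∑ i, (w i * Real.exp (g i + s * d i)) * d i) s := by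
    apply HasDerivAt.fun_sum
    intro i _
    have h2 : HasDerivAt (fun t : ℝ => g i + t * d i) (d i) s := by
      simpa using (hasDerivAt_mul_const (d i)).const_add (g i)
    have h3 := h2.exp
    have h4 := h3.const_mul (w i)
    rw [mul_assoc]; exact h4
  have h5 := h1.log (hsum s).ne'
  simpa using h5


lemma contraction {n1 n2 : ℕ} [Nonempty (Fin n1)] [Nonempty (Fin n2)]
    (K : Matrix (Fin n1) (Fin n2) ℝ) (hK : ∀ i j, 0 < K i j)
    {x y : Fin n2 → ℝ} (hx : ∀ i, 0 < x i) (hy : ∀ i, 0 < y i) :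
    varSeminorm (fun k => Real.log (K.mulVec x k) - Real.log (K.mulVec y k)) ≤
      kappaK K * varSeminorm (fun i => Real.log (x i) - Real.log (y i)) := by
  apply var_le
  intro k l
  set d : Fin n2 → ℝ := fun i => Real.log (x i) - Real.log (y i) with hddef
  set g : Fin n2 → ℝ := fun i => Real.log (y i) with hgdef
  set C := kappaK K * varSeminorm d with hCdef
  set φ : ℝ → ℝ := fun s =>
    Real.log (∑ i, K k i * Real.exp (g i + s * d i)) -
    Real.log (∑ i, K l i * Real.exp (g i + s * d i)) with hφdef
  have hexp0 : ∀ i, Real.exp (g i + 0 * d i) = y i := by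
    intro i; rw [hgdef]; simp [Real.exp_log (hy i)]
  have hexp1 : ∀ i, Real.exp (g i + 1 * d i) = x i := by
    intro i; rw [hgdef, hddef]
    simp only [one_mul]
    rw [show Real.log (y i) + (Real.log (x i) - Real.log (y i)) = Real.log (x i) by ring]
    exact Real.exp_log (hx i)
  have hmv : ∀ (z : Fin n2 → ℝ) (m : Fin n1), K.mulVec z m = ∑ i, K m i * z i := by
    intro z m; rfl
  -- derivative of φ
  set Φ : ℝ → ℝ := fun s =>
    (∑ i, (K k i * Real.exp (g i + s * d i)) * d i) / (∑ i, K k i * Real.exp (g i + s * d i)) -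
    (∑ i, (K l i * Real.exp (g i + s * d i)) * d i) / (∑ i, K l i * Real.exp (g i + s * d i))
    with hΦdef
  have hderiv : ∀ s, HasDerivAt φ (Φ s) s := by
    intro s
    exact (hasDeriv_logsum (fun i => K k i) (fun i => hK k i) g d s).sub
      (hasDeriv_logsum (fun i => K l i) (fun i => hK l i) g d s)
  have hψ1 : 1 ≤ psiK K := one_le_psiK K hK
  have hcross : ∀ (s : ℝ) (i j : Fin n2),
      (K k i * Real.exp (g i + s * d i)) * (K l j * Real.exp (g j + s * d j)) ≤
        psiK K * ((K k j * Real.exp (g j + s * d j)) * (K l i * Real.exp (g i + s * d i))) := by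
    intro s i j
    have h1 := le_psiK K k l i j
    have h2 : K k i * K l j ≤ psiK K * (K l i * K k j) := by
      rw [div_le_iff₀ (mul_pos (hK l i) (hK k j))] at h1
      linarith [h1]
    have hE : 0 < Real.exp (g i + s * d i) * Real.exp (g j + s * d j) := by positivity
    calc (K k i * Real.exp (g i + s * d i)) * (K l j * Real.exp (g j + s * d j))
        = (K k i * K l j) * (Real.exp (g i + s * d i) * Real.exp (g j + s * d j)) := by ring
      _ ≤ (psiK K * (K l i * K k j)) * (Real.exp (g i + s * d i) * Real.exp (g j + s * d j)) :=
          mul_le_mul_of_nonneg_right h2 hE.le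
      _ = psiK K * ((K k j * Real.exp (g j + s * d j)) * (K l i * Real.exp (g i + s * d i))) := by
          ring
  have hbound : ∀ s : ℝ, |Φ s| ≤ C := by
    intro s
    rw [abs_le]
    constructor
    · have := deriv_bound (a := fun i => K l i * Real.exp (g i + s * d i))
        (a' := fun i => K k i * Real.exp (g i + s * d i))
        (fun i => mul_pos (hK l i) (Real.exp_pos _))
        (fun i => mul_pos (hK k i) (Real.exp_pos _)) hψ1
        (fun i j => by linear_combination hcross s j i) d
      rw [hΦdef, hCdef]
      unfold kappaK
      simp only [neg_le_sub_iff_le_add]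
      linarith [this]
    · have := deriv_bound (a := fun i => K k i * Real.exp (g i + s * d i))
        (a' := fun i => K l i * Real.exp (g i + s * d i))
        (fun i => mul_pos (hK k i) (Real.exp_pos _))
        (fun i => mul_pos (hK l i) (Real.exp_pos _)) hψ1
        (fun i j => hcross s i j) d
      rw [hΦdef, hCdef]
      unfold kappaK
      linarith [this]
  have hmvt : |φ 1 - φ 0| ≤ C := by
    have := norm_image_sub_le_of_norm_deriv_le_segment_01'
      (f := φ) (f' := Φ) (C := C)
      (fun s _ => (hderiv s).hasDerivWithinAt)
      (fun s _ => by rw [Real.norm_eq_abs]; exact hbound s)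
    rwa [Real.norm_eq_abs] at this
  have hgoal : (fun k => Real.log (K.mulVec x k) - Real.log (K.mulVec y k)) k -
      (fun k => Real.log (K.mulVec x k) - Real.log (K.mulVec y k)) l = φ 1 - φ 0 := by
    simp only [hφdef]
    rw [hmv x k, hmv y k, hmv x l, hmv y l]
    have e1 : ∀ m : Fin n1, (∑ i, K m i * Real.exp (g i + 1 * d i)) = ∑ i, K m i * x i := by
      intro m; apply Finset.sum_congr rfl; intro i _; rw [hexp1 i]
    have e0 : ∀ m : Fin n1, (∑ i, K m i * Real.exp (g i + 0 * d i)) = ∑ i, K m i * y i := by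
      intro m; apply Finset.sum_congr rfl; intro i _; rw [hexp0 i]
    rw [e1 k, e1 l, e0 k, e0 l]
    ring
  rw [hgoal]
  calc φ 1 - φ 0 ≤ |φ 1 - φ 0| := le_abs_self _
    _ ≤ C := hmvt

/-- Geometric convergence of the approximate Sinkhorn gradient: along the Sinkhorn
iterations with fixed point `(u*, v*)`, for every `t` and every `ε > 0`,
`‖ε log v^{(t)} - ε log v*‖_var ≤ κ(K)^{2t} ‖ε log v^{(0)} - ε log v*‖_var`. -/
theorem sinkhorn_gradient_geometric_convergence {R1 R2 : ℕ}
    [Nonempty (Fin R1)] [Nonempty (Fin R2)]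
    (K : Matrix (Fin R1) (Fin R2) ℝ) (hK : ∀ i j, 0 < K i j)
    (μ : Fin R1 → ℝ) (ν : Fin R2 → ℝ)
    (hμpos : ∀ m, 0 < μ m) (hνpos : ∀ n, 0 < ν n)
    (hμsum : ∑ m, μ m = 1) (hνsum : ∑ n, ν n = 1)
    (u : ℕ → Fin R1 → ℝ) (v : ℕ → Fin R2 → ℝ)
    (hupos : ∀ t m, 0 < u t m) (hvpos : ∀ t n, 0 < v t n)
    (hiter_u : ∀ t m, u (t + 1) m = μ m / K.mulVec (v t) m)
    (hiter_v : ∀ t n, v (t + 1) n = ν n / K.transpose.mulVec (u (t + 1)) n)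
    (ustar : Fin R1 → ℝ) (vstar : Fin R2 → ℝ)
    (hustar_pos : ∀ m, 0 < ustar m) (hvstar_pos : ∀ n, 0 < vstar n)
    (hustar : ∀ m, ustar m = μ m / K.mulVec vstar m)
    (hvstar : ∀ n, vstar n = ν n / K.transpose.mulVec ustar n)
    (ε : ℝ) (hε : 0 < ε) :
    ∀ t : ℕ,
      varSeminorm (fun n => ε * Real.log (v t n) - ε * Real.log (vstar n)) ≤
        kappaK K ^ (2 * t) *
          varSeminorm (fun n => ε * Real.log (v 0 n) - ε * Real.log (vstar n)) := by

  have hκ0 : 0 ≤ kappaK K := kappa_nonneg K hK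
  have hKt : ∀ (i : Fin R2) (j : Fin R1), 0 < K.transpose i j := fun i j => hK j i
  have hmvpos : ∀ (z : Fin R2 → ℝ), (∀ i, 0 < z i) → ∀ m, 0 < K.mulVec z m := by
    intro z hz m
    exact Finset.sum_pos (fun i _ => mul_pos (hK m i) (hz i)) Finset.univ_nonempty
  have hmvtpos : ∀ (z : Fin R1 → ℝ), (∀ i, 0 < z i) → ∀ n, 0 < K.transpose.mulVec z n := by
    intro z hz n
    exact Finset.sum_pos (fun i _ => mul_pos (hKt n i) (hz i)) Finset.univ_nonempty
  set D : ℕ → ℝ := fun t => varSeminorm (fun n => Real.log (v t n) - Real.log (vstar n))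
    with hDdef
  have hstep : ∀ t, D (t + 1) ≤ kappaK K ^ 2 * D t := by
    intro t
    -- half step 1 : u
    have hu_eq : (fun m => Real.log (ustar m) - Real.log (u (t + 1) m)) =
        (fun m => Real.log (K.mulVec (v t) m) - Real.log (K.mulVec vstar m)) := by
      funext m
      rw [hiter_u t m, hustar m,
        Real.log_div (hμpos m).ne' (hmvpos vstar hvstar_pos m).ne',
        Real.log_div (hμpos m).ne' (hmvpos (v t) (hvpos t) m).ne']
      ring
    have h1 : varSeminorm (fun m => Real.log (ustar m) - Real.log (u (t + 1) m)) ≤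
        kappaK K * D t := by
      rw [hu_eq]
      exact contraction K hK (hvpos t) hvstar_pos
    -- half step 2 : v
    have hv_eq : (fun n => Real.log (v (t + 1) n) - Real.log (vstar n)) =
        (fun n => Real.log (K.transpose.mulVec ustar n) -
          Real.log (K.transpose.mulVec (u (t + 1)) n)) := by
      funext n
      rw [hiter_v t n, hvstar n,
        Real.log_div (hνpos n).ne' (hmvtpos (u (t + 1)) (hupos (t + 1)) n).ne',
        Real.log_div (hνpos n).ne' (hmvtpos ustar hustar_pos n).ne']
      ring
    have h2 : D (t + 1) ≤ kappaK K *
        varSeminorm (fun m => Real.log (ustar m) - Real.log (u (t + 1) m)) := by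
      rw [hDdef]
      simp only []
      rw [hv_eq]
      have := contraction K.transpose hKt (x := ustar) (y := u (t + 1))
        hustar_pos (hupos (t + 1))
      rwa [kappaK_transpose] at this
    calc D (t + 1) ≤ kappaK K *
          varSeminorm (fun m => Real.log (ustar m) - Real.log (u (t + 1) m)) := h2
      _ ≤ kappaK K * (kappaK K * D t) := mul_le_mul_of_nonneg_left h1 hκ0
      _ = kappaK K ^ 2 * D t := by ring
  have hgeom : ∀ t, D t ≤ (kappaK K ^ 2) ^ t * D 0 := by
    intro t
    induction t with
    | zero => simp
    | succ t ih =>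
      calc D (t + 1) ≤ kappaK K ^ 2 * D t := hstep t
        _ ≤ kappaK K ^ 2 * ((kappaK K ^ 2) ^ t * D 0) :=
            mul_le_mul_of_nonneg_left ih (by positivity)
        _ = (kappaK K ^ 2) ^ (t + 1) * D 0 := by ring
  intro t
  have hre : ∀ s : ℕ, (fun n => ε * Real.log (v s n) - ε * Real.log (vstar n)) =
      (fun n => ε * (Real.log (v s n) - Real.log (vstar n))) := by
    intro s; funext n; ring
  rw [hre t, hre 0, var_smul _ hε.le, var_smul _ hε.le]
  calc ε * D t ≤ ε * ((kappaK K ^ 2) ^ t * D 0) :=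
        mul_le_mul_of_nonneg_left (hgeom t) hε.le
    _ = kappaK K ^ (2 * t) * (ε * D 0) := by rw [pow_mul]; ring
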